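/- Let f : G → ℂ be continuous with compact support and let h : G → ℝ be continuous, compactly supported, with h ≥ 0 and Σ_{γ ∈ Γ} h(γx) = 1 for all x ∈ G. Let F ⊆ G be a measurable fundamental domain with compact closure for the left translation action of Γ on G. Then the set { γ ∈ Γ : there exists x ∈ supp(h) with f(x⁻¹ γ x) ≠ 0 } is finite, the function x ↦ Σ_{γ ∈ Γ} f(x⁻¹ γ x) tr χ(γ) is well defined, invariant under left translation by Γ, and continuous, and ∫_F ( Σ_{γ ∈ Γ} f(x⁻¹ γ x) tr χ(γ) ) dμ(x) = Σ_{γ ∈ Γ} ∫_G h(x) f(x⁻¹ γ x) tr χ(γ) dμ(x), with absolutely convergent sums and integrals on both sides. -/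

import Mathlib

open MeasureTheory

private theorem finite_subgroup_inter_compact {G : Type*} [Group G] [TopologicalSpace G]
    [IsTopologicalGroup G] [T2Space G] (Γ : Subgroup G) [DiscreteTopology Γ]
    {D : Set G} (hD : IsCompact D) : {γ : Γ | (γ : G) ∈ D}.Finite := by
  have hclosed : IsClosed (Γ : Set G) := Subgroup.isClosed_of_discrete
  have hemb : Topology.IsClosedEmbedding ((↑) : Γ → G) :=
    hclosed.isClosedEmbedding_subtypeVal
  exact (hemb.isCompact_preimage hD).finite_of_discrete

private theorem finite_conj_support {G : Type*} [Group G] [TopologicalSpace G]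
    [IsTopologicalGroup G] [T2Space G] (Γ : Subgroup G) [DiscreteTopology Γ]
    (f : G → ℂ) (hfsupp : HasCompactSupport f) {C : Set G} (hC : IsCompact C) :
    {γ : Γ | ∃ x ∈ C, f (x⁻¹ * (γ : G) * x) ≠ 0}.Finite := by
  have hD : IsCompact ((fun p : G × G => p.1 * p.2 * p.1⁻¹) '' (C ×ˢ tsupport f)) :=
    (hC.prod hfsupp).image ((continuous_fst.mul continuous_snd).mul continuous_fst.inv)
  refine (finite_subgroup_inter_compact Γ hD).subset ?_
  rintro γ ⟨x, hx, hfx⟩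
  exact ⟨(x, x⁻¹ * (γ : G) * x), ⟨hx, subset_tsupport f hfx⟩, by group⟩

set_option maxHeartbeats 1000000 in
/-- Unfolding step in the trace formula: with a partition of unity
`h` for `Γ\G` and a fundamental domain `F` with compact closure, the diagonal sum
`x ↦ Σ_{γ ∈ Γ} f (x⁻¹ γ x) tr χ(γ)` is a well-defined, `Γ`-invariant, continuous
function, and its integral over `F` unfolds into
`Σ_{γ ∈ Γ} ∫_G h x f (x⁻¹ γ x) tr χ(γ) dμ x`, all sums and integrals being
absolutely convergent. -/
theorem integral_of_diagonal_kernel_unfolds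
    {G V : Type*} [Group G] [TopologicalSpace G] [IsTopologicalGroup G]
    [LocallyCompactSpace G] [T2Space G] [SecondCountableTopology G]
    [MeasurableSpace G] [BorelSpace G] (μ : Measure G)
    [μ.IsHaarMeasure] [μ.IsMulRightInvariant]
    [NormedAddCommGroup V] [NormedSpace ℂ V] [FiniteDimensional ℂ V] [Nontrivial V]
    (Γ : Subgroup G) [DiscreteTopology Γ]
    (hcocompact : ∃ C : Set G, IsCompact C ∧ ∀ g : G, ∃ γ ∈ Γ, γ * g ∈ C)
    (χ : Γ →* (V →ₗ[ℂ] V)ˣ)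
    (f : G → ℂ) (hf : Continuous f) (hfsupp : HasCompactSupport f)
    (h : G → ℝ) (hh : Continuous h) (hhsupp : HasCompactSupport h)
    (hhnonneg : ∀ x, 0 ≤ h x)
    (hhsum : ∀ x : G, {γ : Γ | h ((γ : G) * x) ≠ 0}.Finite ∧
      ∑' γ : Γ, h ((γ : G) * x) = 1)
    (F : Set G) (hF : IsFundamentalDomain Γ F μ) (hFc : IsCompact (closure F)) :
    {γ : Γ | ∃ x ∈ tsupport h, f (x⁻¹ * (γ : G) * x) ≠ 0}.Finite ∧
    (∀ x : G, {γ : Γ | f (x⁻¹ * (γ : G) * x) ≠ 0}.Finite) ∧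
    (∀ (γ₀ : Γ) (x : G),
      (∑' γ : Γ, f (((γ₀ : G) * x)⁻¹ * (γ : G) * ((γ₀ : G) * x)) *
          LinearMap.trace ℂ V (χ γ : V →ₗ[ℂ] V)) =
        ∑' γ : Γ, f (x⁻¹ * (γ : G) * x) * LinearMap.trace ℂ V (χ γ : V →ₗ[ℂ] V)) ∧
    Continuous (fun x : G =>
      ∑' γ : Γ, f (x⁻¹ * (γ : G) * x) * LinearMap.trace ℂ V (χ γ : V →ₗ[ℂ] V)) ∧
    IntegrableOn (fun x : G =>
      ∑' γ : Γ, f (x⁻¹ * (γ : G) * x) * LinearMap.trace ℂ V (χ γ : V →ₗ[ℂ] V)) F μ ∧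
    (∀ γ : Γ, Integrable (fun x : G =>
      (h x : ℂ) * (f (x⁻¹ * (γ : G) * x) * LinearMap.trace ℂ V (χ γ : V →ₗ[ℂ] V))) μ) ∧
    Summable (fun γ : Γ => ∫ x, norm
      ((h x : ℂ) * (f (x⁻¹ * (γ : G) * x) * LinearMap.trace ℂ V (χ γ : V →ₗ[ℂ] V))) ∂μ) ∧
    (∫ x in F,
        (∑' γ : Γ, f (x⁻¹ * (γ : G) * x) * LinearMap.trace ℂ V (χ γ : V →ₗ[ℂ] V)) ∂μ) =
      ∑' γ : Γ, ∫ x,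
        (h x : ℂ) * (f (x⁻¹ * (γ : G) * x) * LinearMap.trace ℂ V (χ γ : V →ₗ[ℂ] V)) ∂μ := by
  classical
  have hcnt : Countable Γ := by
    obtain ⟨s, hsc, hsd⟩ := TopologicalSpace.exists_countable_dense Γ
    have hs : s = Set.univ := by
      rw [← (isClosed_discrete s).closure_eq, hsd.closure_eq]
    rw [hs] at hsc
    exact Set.countable_univ_iff.mp hsc
  have key : ∀ {C : Set G}, IsCompact C →
      {γ : Γ | ∃ x ∈ C, f (x⁻¹ * (γ : G) * x) ≠ 0}.Finite :=
    fun hC => finite_conj_support Γ f hfsupp hC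
  have part1 : {γ : Γ | ∃ x ∈ tsupport h, f (x⁻¹ * (γ : G) * x) ≠ 0}.Finite := key hhsupp
  have part2 : ∀ x : G, {γ : Γ | f (x⁻¹ * (γ : G) * x) ≠ 0}.Finite := fun x =>
    (key (isCompact_singleton : IsCompact {x})).subset fun γ hγ => ⟨x, rfl, hγ⟩
  have part3 : ∀ (γ₀ : Γ) (x : G),
      (∑' γ : Γ, f (((γ₀ : G) * x)⁻¹ * (γ : G) * ((γ₀ : G) * x)) *
          LinearMap.trace ℂ V (χ γ : V →ₗ[ℂ] V)) =
        ∑' γ : Γ, f (x⁻¹ * (γ : G) * x) * LinearMap.trace ℂ V (χ γ : V →ₗ[ℂ] V) := by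
    intro γ₀ x
    have hterm : ∀ γ : Γ, f (((γ₀ : G) * x)⁻¹ * (γ : G) * ((γ₀ : G) * x)) *
        LinearMap.trace ℂ V (χ γ : V →ₗ[ℂ] V) =
        (fun δ : Γ => f (x⁻¹ * (δ : G) * x) * LinearMap.trace ℂ V (χ δ : V →ₗ[ℂ] V))
          ((MulAut.conj γ₀⁻¹).toEquiv γ) := by
      intro γ
      simp only [MulEquiv.toEquiv_eq_coe, Equiv.coe_fn_mk, MulEquiv.coe_toEquiv,
        MulAut.conj_apply]
      congr 1
      · congr 1
        push_cast
        group
      · have h1 : χ (γ₀⁻¹ * γ * γ₀⁻¹⁻¹) = χ γ₀⁻¹ * χ γ * (χ γ₀⁻¹)⁻¹ := by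
          rw [map_mul, map_mul, ← map_inv]
        rw [h1, Units.val_mul, Units.val_mul, LinearMap.trace_conj]
    rw [tsum_congr hterm]
    exact (MulAut.conj γ₀⁻¹).toEquiv.tsum_eq
      (fun δ : Γ => f (x⁻¹ * (δ : G) * x) * LinearMap.trace ℂ V (χ δ : V →ₗ[ℂ] V))
  have part4 : Continuous (fun x : G =>
      ∑' γ : Γ, f (x⁻¹ * (γ : G) * x) * LinearMap.trace ℂ V (χ γ : V →ₗ[ℂ] V)) := by
    rw [continuous_iff_continuousAt]
    intro x₀
    obtain ⟨K, hKc, hKn⟩ := exists_compact_mem_nhds x₀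
    have hfin := key hKc
    have hcont : Continuous (fun x : G => ∑ γ ∈ hfin.toFinset,
        f (x⁻¹ * (γ : G) * x) * LinearMap.trace ℂ V (χ γ : V →ₗ[ℂ] V)) :=
      continuous_finset_sum _ fun γ _ => (hf.comp ((continuous_inv.mul continuous_const).mul continuous_id)).mul continuous_const
    refine hcont.continuousAt.congr ?_
    filter_upwards [hKn] with x hx
    refine (tsum_eq_sum fun γ hγ => ?_).symm
    have hz : f (x⁻¹ * (γ : G) * x) = 0 := by
      by_contra hne
      exact hγ (hfin.mem_toFinset.2 ⟨x, hx, hne⟩)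
    simp [hz]
  have part5 : IntegrableOn (fun x : G =>
      ∑' γ : Γ, f (x⁻¹ * (γ : G) * x) * LinearMap.trace ℂ V (χ γ : V →ₗ[ℂ] V)) F μ :=
    (ContinuousOn.integrableOn_compact hFc part4.continuousOn).mono_set subset_closure
  have part6 : ∀ γ : Γ, Integrable (fun x : G =>
      (h x : ℂ) * (f (x⁻¹ * (γ : G) * x) * LinearMap.trace ℂ V (χ γ : V →ₗ[ℂ] V))) μ := by
    intro γ
    have hc : Continuous (fun x : G =>
        (h x : ℂ) * (f (x⁻¹ * (γ : G) * x) * LinearMap.trace ℂ V (χ γ : V →ₗ[ℂ] V))) :=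
      (Complex.continuous_ofReal.comp hh).mul ((hf.comp ((continuous_inv.mul continuous_const).mul continuous_id)).mul continuous_const)
    have hs : HasCompactSupport (fun x : G => (h x : ℂ)) :=
      hhsupp.comp_left (g := Complex.ofReal) rfl
    exact hc.integrable_of_hasCompactSupport hs.mul_right
  have hvanish : ∀ γ : Γ, γ ∉ part1.toFinset → ∀ x : G,
      (h x : ℂ) * (f (x⁻¹ * (γ : G) * x) * LinearMap.trace ℂ V (χ γ : V →ₗ[ℂ] V)) = 0 := by
    intro γ hγ x
    by_cases hx : h x = 0
    · simp [hx]
    · have hz : f (x⁻¹ * (γ : G) * x) = 0 := by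
        by_contra hne
        exact hγ (part1.mem_toFinset.2 ⟨x, subset_tsupport h hx, hne⟩)
      simp [hz]
  have part7 : Summable (fun γ : Γ => ∫ x, norm
      ((h x : ℂ) * (f (x⁻¹ * (γ : G) * x) * LinearMap.trace ℂ V (χ γ : V →ₗ[ℂ] V))) ∂μ) := by
    refine summable_of_ne_finset_zero (s := part1.toFinset) ?_
    intro γ hγ
    simp only [hvanish γ hγ, map_zero, norm_zero, integral_zero]
  -- the big unfolding equality
  have hTfin : {δ : Γ | ∃ x ∈ closure F, h ((δ : G) * x) ≠ 0}.Finite := by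
    have hD : IsCompact ((fun p : G × G => p.1 * p.2⁻¹) '' ((tsupport h) ×ˢ closure F)) :=
      (hhsupp.prod hFc).image (continuous_fst.mul continuous_snd.inv)
    refine (finite_subgroup_inter_compact Γ hD).subset ?_
    rintro δ ⟨x, hx, hne⟩
    exact ⟨((δ : G) * x, x), ⟨subset_tsupport h hne, hx⟩, by group⟩
  have hpt : ∀ x : G, (h x : ℂ) *
      (∑' γ : Γ, f (x⁻¹ * (γ : G) * x) * LinearMap.trace ℂ V (χ γ : V →ₗ[ℂ] V)) =
      ∑ γ ∈ part1.toFinset,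
        (h x : ℂ) * (f (x⁻¹ * (γ : G) * x) * LinearMap.trace ℂ V (χ γ : V →ₗ[ℂ] V)) := by
    intro x
    by_cases hx : h x = 0
    · simp [hx]
    · have hxs : x ∈ tsupport h := subset_tsupport h hx
      have hsum : (∑' γ : Γ, f (x⁻¹ * (γ : G) * x) * LinearMap.trace ℂ V (χ γ : V →ₗ[ℂ] V))
          = ∑ γ ∈ part1.toFinset,
            f (x⁻¹ * (γ : G) * x) * LinearMap.trace ℂ V (χ γ : V →ₗ[ℂ] V) := by
        refine tsum_eq_sum fun γ hγ => ?_
        have hz : f (x⁻¹ * (γ : G) * x) = 0 := by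
          by_contra hne
          exact hγ (part1.mem_toFinset.2 ⟨x, hxs, hne⟩)
        simp [hz]
      rw [hsum, Finset.mul_sum]
  have hint : Integrable (fun x : G => (h x : ℂ) *
      (∑' γ : Γ, f (x⁻¹ * (γ : G) * x) * LinearMap.trace ℂ V (χ γ : V →ₗ[ℂ] V))) μ := by
    rw [funext hpt]
    exact integrable_finset_sum _ fun γ _ => part6 γ
  have hRHS : (∑' γ : Γ, ∫ x,
      (h x : ℂ) * (f (x⁻¹ * (γ : G) * x) * LinearMap.trace ℂ V (χ γ : V →ₗ[ℂ] V)) ∂μ)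
      = ∫ x, (h x : ℂ) *
        (∑' γ : Γ, f (x⁻¹ * (γ : G) * x) * LinearMap.trace ℂ V (χ γ : V →ₗ[ℂ] V)) ∂μ := by
    rw [funext hpt, integral_finset_sum _ fun γ _ => part6 γ]
    refine tsum_eq_sum fun γ hγ => ?_
    simp only [hvanish γ hγ, integral_zero]
  have hunfold : (∫ x, (h x : ℂ) *
      (∑' γ : Γ, f (x⁻¹ * (γ : G) * x) * LinearMap.trace ℂ V (χ γ : V →ₗ[ℂ] V)) ∂μ)
      = ∑' δ : Γ, ∫ x in F, (h ((δ : G) * x) : ℂ) *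
        (∑' γ : Γ, f (x⁻¹ * (γ : G) * x) * LinearMap.trace ℂ V (χ γ : V →ₗ[ℂ] V)) ∂μ := by
    rw [hF.integral_eq_tsum'' _ hint]
    refine tsum_congr fun δ => ?_
    refine integral_congr_ae (ae_of_all _ fun x => ?_)
    show (h ((δ : G) * x) : ℂ) *
        (∑' γ : Γ, f (((δ : G) * x)⁻¹ * (γ : G) * ((δ : G) * x)) *
          LinearMap.trace ℂ V (χ γ : V →ₗ[ℂ] V)) = _
    rw [part3 δ x]
  have hTzero : ∀ δ : Γ, δ ∉ hTfin.toFinset →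
      (∫ x in F, (h ((δ : G) * x) : ℂ) *
        (∑' γ : Γ, f (x⁻¹ * (γ : G) * x) * LinearMap.trace ℂ V (χ γ : V →ₗ[ℂ] V)) ∂μ) = 0 := by
    intro δ hδ
    refine integral_eq_zero_of_ae ?_
    refine (ae_restrict_iff'₀ hF.nullMeasurableSet).2 (ae_of_all _ fun x hx => ?_)
    have hz : h ((δ : G) * x) = 0 := by
      by_contra hne
      exact hδ (hTfin.mem_toFinset.2 ⟨x, subset_closure hx, hne⟩)
    simp [hz]
  have hintF : ∀ δ : Γ, IntegrableOn (fun x : G => (h ((δ : G) * x) : ℂ) *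
      (∑' γ : Γ, f (x⁻¹ * (γ : G) * x) * LinearMap.trace ℂ V (χ γ : V →ₗ[ℂ] V))) F μ := by
    intro δ
    have hc : Continuous (fun x : G => (h ((δ : G) * x) : ℂ) *
        (∑' γ : Γ, f (x⁻¹ * (γ : G) * x) * LinearMap.trace ℂ V (χ γ : V →ₗ[ℂ] V))) :=
      (Complex.continuous_ofReal.comp (hh.comp (continuous_const.mul continuous_id))).mul part4
    exact (ContinuousOn.integrableOn_compact hFc hc.continuousOn).mono_set subset_closure
  have hone : (∫ x in F,
      (∑' γ : Γ, f (x⁻¹ * (γ : G) * x) * LinearMap.trace ℂ V (χ γ : V →ₗ[ℂ] V)) ∂μ)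
      = ∫ x in F, ∑ δ ∈ hTfin.toFinset, (h ((δ : G) * x) : ℂ) *
        (∑' γ : Γ, f (x⁻¹ * (γ : G) * x) * LinearMap.trace ℂ V (χ γ : V →ₗ[ℂ] V)) ∂μ := by
    refine integral_congr_ae ?_
    refine (ae_restrict_iff'₀ hF.nullMeasurableSet).2 (ae_of_all _ fun x hx => ?_)
    have hvan : ∀ δ : Γ, δ ∉ hTfin.toFinset → h ((δ : G) * x) = 0 := by
      intro δ hδ
      by_contra hne
      exact hδ (hTfin.mem_toFinset.2 ⟨x, subset_closure hx, hne⟩)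
    have hsum1 : (∑ δ ∈ hTfin.toFinset, h ((δ : G) * x)) = 1 :=
      (tsum_eq_sum fun δ hδ => hvan δ hδ).symm.trans (hhsum x).2
    beta_reduce
    rw [← Finset.sum_mul, ← Complex.ofReal_sum, hsum1]
    simp
  refine ⟨part1, part2, part3, part4, part5, part6, part7, ?_⟩
  calc (∫ x in F,
      (∑' γ : Γ, f (x⁻¹ * (γ : G) * x) * LinearMap.trace ℂ V (χ γ : V →ₗ[ℂ] V)) ∂μ)
      = ∫ x in F, ∑ δ ∈ hTfin.toFinset, (h ((δ : G) * x) : ℂ) *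
        (∑' γ : Γ, f (x⁻¹ * (γ : G) * x) * LinearMap.trace ℂ V (χ γ : V →ₗ[ℂ] V)) ∂μ := hone
    _ = ∑ δ ∈ hTfin.toFinset, ∫ x in F, (h ((δ : G) * x) : ℂ) *
        (∑' γ : Γ, f (x⁻¹ * (γ : G) * x) * LinearMap.trace ℂ V (χ γ : V →ₗ[ℂ] V)) ∂μ :=
      integral_finset_sum _ fun δ _ => hintF δ
    _ = ∑' δ : Γ, ∫ x in F, (h ((δ : G) * x) : ℂ) *
        (∑' γ : Γ, f (x⁻¹ * (γ : G) * x) * LinearMap.trace ℂ V (χ γ : V →ₗ[ℂ] V)) ∂μ :=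
      (tsum_eq_sum fun δ hδ => hTzero δ hδ).symm
    _ = ∫ x, (h x : ℂ) *
        (∑' γ : Γ, f (x⁻¹ * (γ : G) * x) * LinearMap.trace ℂ V (χ γ : V →ₗ[ℂ] V)) ∂μ :=
      hunfold.symm
    _ = ∑' γ : Γ, ∫ x,
        (h x : ℂ) * (f (x⁻¹ * (γ : G) * x) * LinearMap.trace ℂ V (χ γ : V →ₗ[ℂ] V)) ∂μ :=
      hRHS.symm
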